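/- Let φ be the Markoff-type function on the regions adjacent to a fixed region u of the Farey tree: if y_n, n ∈ ℤ, are the regions in order around ∂u, then φ(y_{n+1}) = φ(u)φ(y_n) − φ(y_{n−1}). If φ(u) = x ∈ ℂ with x ∉ [−2,2] and x² ≠ μ where μ := φ(y_{n−1})² + φ(y_n)² + x² − x·φ(y_{n−1})φ(y_n) (independent of n), then |φ(y_n)| → ∞ as n → ±∞. -/

import Mathlib

open Filter

private lemma tendsto_zpow_aux {r : ℝ} (hr : 1 < r) :
    Tendsto (fun n : ℤ => r ^ n) atTop atTop := by
  refine tendsto_atTop_atTop.2 fun b => ?_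
  obtain ⟨N, hN⟩ := pow_unbounded_of_one_lt b hr
  refine ⟨N, fun n hn => le_trans hN.le ?_⟩
  calc r ^ N = r ^ (N : ℤ) := (zpow_natCast r N).symm
    _ ≤ r ^ n := zpow_le_zpow_right₀ hr.le hn

private lemma abs_grow (l A B : ℂ) (hr : 1 < ‖l‖) (hA : A ≠ 0) :
    Tendsto (fun n : ℤ => ‖A * l ^ n + B * l ^ (-n)‖) atTop atTop := by
  have hApos : 0 < ‖A‖ := by simpa using hA
  have h1 : Tendsto (fun n : ℤ => ‖A‖ * ‖l‖ ^ n + (-‖B‖))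
      atTop atTop :=
    tendsto_atTop_add_const_right _ _ (Tendsto.const_mul_atTop hApos (tendsto_zpow_aux hr))
  refine tendsto_atTop_mono' _ ?_ h1
  filter_upwards [eventually_ge_atTop (0 : ℤ)] with n hn
  have habs : ‖A * l ^ n‖ ≤
      ‖A * l ^ n + B * l ^ (-n)‖ + ‖B * l ^ (-n)‖ := by
    have := norm_add_le (A * l ^ n + B * l ^ (-n)) (-(B * l ^ (-n)))
    simpa using this
  have h2 : ‖B * l ^ (-n)‖ ≤ ‖B‖ := by
    rw [norm_mul, norm_zpow]
    calc ‖B‖ * ‖l‖ ^ (-n) ≤ ‖B‖ * 1 := by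
          refine mul_le_mul_of_nonneg_left ?_ (norm_nonneg B)
          exact zpow_le_one_of_nonpos₀ hr.le (by omega)
      _ = ‖B‖ := mul_one _
  have h3 : ‖A * l ^ n‖ = ‖A‖ * ‖l‖ ^ n := by
    rw [norm_mul, norm_zpow]
  linarith

/-- Growth of a Markoff-type recurrence around the boundary of a region: if
`z : ℤ → ℂ` satisfies `z_{n+1} = x z_n − z_{n−1}` with `x ∉ [−2,2]` and
`x² ≠ μ` where `μ = z₀² + z₁² + x² − x z₀ z₁`, then `|z_n| → ∞` as `n → ±∞`. -/
theorem markoff_boundary_growth (x : ℂ) (z : ℤ → ℂ)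
    (hrec : ∀ n : ℤ, z (n + 1) = x * z n - z (n - 1))
    (hx : x ∉ (fun t : ℝ => (t : ℂ)) '' Set.Icc (-2 : ℝ) 2)
    (hμ : x ^ 2 ≠ z 0 ^ 2 + z 1 ^ 2 + x ^ 2 - x * z 0 * z 1) :
    Filter.Tendsto (fun n => ‖z n‖) Filter.atTop Filter.atTop ∧
    Filter.Tendsto (fun n => ‖z n‖) Filter.atBot Filter.atTop := by
  -- abs ≠ 1 for any m with m + m⁻¹ = x
  have habs1 : ∀ m : ℂ, m ≠ 0 → m + m⁻¹ = x → ‖m‖ ≠ 1 := by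
    intro m hm0 hmx h1
    apply hx
    have hinv : m⁻¹ = (starRingEnd ℂ) m := by
      rw [Complex.inv_def, Complex.normSq_eq_norm_sq, h1]
      simp
    have hre : |m.re| ≤ 1 := h1 ▸ Complex.abs_re_le_norm m
    refine ⟨2 * m.re, ⟨by cases abs_le.mp hre; linarith, by cases abs_le.mp hre; linarith⟩, ?_⟩
    show ((2 * m.re : ℝ) : ℂ) = x
    rw [← hmx, hinv, Complex.add_conj]
  -- find eigenvalue l with |l| > 1
  obtain ⟨l, hl0, hlx, hr⟩ : ∃ l : ℂ, l ≠ 0 ∧ l + l⁻¹ = x ∧ 1 < ‖l‖ := by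
    obtain ⟨w, hw⟩ := Complex.isAlgClosed.exists_pow_nat_eq (x ^ 2 - 4) two_pos
    have hprod : ((x + w) / 2) * ((x - w) / 2) = 1 := by
      linear_combination (-1 / 4 : ℂ) * hw
    have hl0 : (x + w) / 2 ≠ 0 := left_ne_zero_of_mul_eq_one hprod
    have hinv : (x - w) / 2 = ((x + w) / 2)⁻¹ := eq_inv_of_mul_eq_one_left
      (by rw [mul_comm] at hprod; exact hprod)
    have hsum : (x + w) / 2 + ((x + w) / 2)⁻¹ = x := by rw [← hinv]; ring
    have hne1 : ‖(x + w) / 2‖ ≠ 1 := habs1 _ hl0 hsum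
    rcases lt_or_gt_of_ne hne1 with h | h
    · refine ⟨((x + w) / 2)⁻¹, inv_ne_zero hl0, by rw [inv_inv, add_comm]; exact hsum, ?_⟩
      rw [norm_inv]
      exact (one_lt_inv₀ (by simpa using hl0)).mpr h
    · exact ⟨(x + w) / 2, hl0, hsum, h⟩
  have hl2 : l - l⁻¹ ≠ 0 := by
    intro h
    rw [sub_eq_zero] at h
    have hsq : l * l = 1 := by nth_rewrite 2 [h]; exact mul_inv_cancel₀ hl0
    have := congrArg (‖·‖) hsq
    rw [norm_mul, norm_one] at this
    nlinarith
  obtain ⟨A, hAdef⟩ : ∃ A : ℂ, A = (z 1 - z 0 * l⁻¹) / (l - l⁻¹) := ⟨_, rfl⟩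
  obtain ⟨B, hBdef⟩ : ∃ B : ℂ, B = z 0 - A := ⟨_, rfl⟩
  have hA1 : A * (l - l⁻¹) = z 1 - z 0 * l⁻¹ := by rw [hAdef]; exact div_mul_cancel₀ _ hl2
  -- recurrence for the closed form
  have step : ∀ m : ℤ, A * l ^ (m + 1) + B * l ^ (-(m + 1)) =
      x * (A * l ^ m + B * l ^ (-m)) - (A * l ^ (m - 1) + B * l ^ (-(m - 1))) := by
    intro m
    rw [← hlx]
    have e1 : l ^ (m + 1) = l ^ m * l := zpow_add_one₀ hl0 m
    have e2 : l ^ (m - 1) = l ^ m * l⁻¹ := zpow_sub_one₀ hl0 m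
    have e3 : l ^ (-(m + 1)) = l ^ (-m) * l⁻¹ := by
      have h : -(m + 1) = -m - 1 := by ring
      rw [h, zpow_sub_one₀ hl0]
    have e4 : l ^ (-(m - 1)) = l ^ (-m) * l := by
      have h : -(m - 1) = -m + 1 := by ring
      rw [h, zpow_add_one₀ hl0]
    rw [e1, e2, e3, e4]
    ring
  -- closed form
  have key : ∀ n : ℤ, z n = A * l ^ n + B * l ^ (-n) ∧
      z (n + 1) = A * l ^ (n + 1) + B * l ^ (-(n + 1)) := by
    intro n
    induction n using Int.induction_on with
    | zero =>
      constructor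
      · simp only [zpow_zero, neg_zero, mul_one]
        rw [hBdef]; ring
      · simp only [zero_add, zpow_one]
        rw [zpow_neg, zpow_one, hBdef]
        linear_combination (-1 : ℂ) * hA1
    | succ n ih =>
      refine ⟨ih.2, ?_⟩
      have hr2 := hrec ((n : ℤ) + 1)
      have h2 : ((n : ℤ) + 1 - 1) = (n : ℤ) := by ring
      rw [h2] at hr2
      have s := step ((n : ℤ) + 1)
      rw [show ((n : ℤ) + 1 - 1) = (n : ℤ) from by ring] at s
      rw [hr2, ih.1, ih.2]
      linear_combination (-1 : ℂ) * s
    | pred n ih =>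
      have hz1 : z (-(n : ℤ) - 1) = x * z (-(n : ℤ)) - z (-(n : ℤ) + 1) := by
        linear_combination hrec (-(n : ℤ))
      constructor
      · show z (-(n : ℤ) - 1) = A * l ^ (-(n : ℤ) - 1) + B * l ^ (-(-(n : ℤ) - 1))
        rw [hz1, ih.1, ih.2]
        linear_combination (-1 : ℂ) * step (-(n : ℤ))
      · show z (-(n : ℤ) - 1 + 1) = A * l ^ (-(n : ℤ) - 1 + 1) + B * l ^ (-(-(n : ℤ) - 1 + 1))
        have e : (-(n : ℤ) - 1 + 1) = -(n : ℤ) := by ring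
        rw [e]
        exact ih.1
  -- A and B nonzero
  have hz0 : z 0 = A + B := by
    have := (key 0).1; simpa using this
  have hz1' : z 1 = A * l + B * l⁻¹ := by
    have := (key 0).2
    simpa [zpow_neg] using this
  have hμ' : z 0 ^ 2 + z 1 ^ 2 - x * z 0 * z 1 ≠ 0 := by
    intro h; exact hμ (by linear_combination -h)
  have hident : z 0 ^ 2 + z 1 ^ 2 - x * z 0 * z 1 = -(A * B) * (l - l⁻¹) ^ 2 := by
    rw [hz0, hz1', ← hlx]
    field_simp
    ring
  have hAB : A * B ≠ 0 := by
    intro h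
    apply hμ'
    rw [hident, h]
    ring
  have hA : A ≠ 0 := fun h => hAB (by rw [h, zero_mul])
  have hB : B ≠ 0 := fun h => hAB (by rw [h, mul_zero])
  have heq : (fun n : ℤ => ‖z n‖) =
      fun n : ℤ => ‖A * l ^ n + B * l ^ (-n)‖ := by
    funext n; rw [(key n).1]
  constructor
  · rw [heq]
    exact abs_grow l A B hr hA
  · have h2 : Tendsto (fun n : ℤ => ‖z (-n)‖) atTop atTop := by
      have heq2 : (fun n : ℤ => ‖z (-n)‖) =
          fun n : ℤ => ‖B * l ^ n + A * l ^ (-n)‖ := by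
        funext n
        rw [(key (-n)).1, neg_neg, add_comm]
      rw [heq2]
      exact abs_grow l B A hr hB
    have hcomp : (fun n : ℤ => ‖z n‖) =
        (fun n : ℤ => ‖z (-n)‖) ∘ (fun n : ℤ => -n) := by
      funext n; simp
    rw [hcomp]
    exact h2.comp tendsto_neg_atBot_atTop
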